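/- Hessian bounds at a touching point of an ordered pair of support functions (claim in the regularity proof of Theorem 2.4). Fix n ≥ 2 and constants C_E ≥ 1, C_S > 0. Let φ₀ and φ₁ be C² functions defined on a neighborhood of a point x ∈ ℝⁿ such that: (a) φ₁ − φ₀ has a local maximum at x; (b) D²φ₁(x) ≥ −C_S·I; (c) there is an n×n symmetric matrix A with (1/C_E)·I ≤ A ≤ C_E·I and trace(A · D²φ₀(x)) ≤ 2C_E. Then, with C_H' := C_E²((n−1)C_S + 2), both −C_H'·I ≤ D²φ₀(x) ≤ C_H'·I and −C_H'·I ≤ D²φ₁(x) ≤ C_H'·I. -/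

import Mathlib

open scoped BigOperators

open Matrix in
private lemma psd_dot' {n : ℕ} {M : Matrix (Fin n) (Fin n) ℝ} (hM : M.PosSemidef)
    (v : Fin n → ℝ) : 0 ≤ v ⬝ᵥ M *ᵥ v := by simpa using hM.dotProduct_mulVec_nonneg v

open Matrix in
private lemma psd_of' {n : ℕ} {M : Matrix (Fin n) (Fin n) ℝ} (h1 : M.IsHermitian)
    (h2 : ∀ v : Fin n → ℝ, 0 ≤ v ⬝ᵥ M *ᵥ v) : M.PosSemidef :=
  Matrix.PosSemidef.of_dotProduct_mulVec_nonneg h1 fun v => by simpa using h2 v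

open Matrix in
private lemma isHermitian_smul' {n : ℕ} {c : ℝ} {M : Matrix (Fin n) (Fin n) ℝ}
    (hM : M.IsHermitian) : (c • M).IsHermitian := by
  unfold Matrix.IsHermitian at *
  rw [Matrix.conjTranspose_smul, star_trivial, hM]

open Matrix in
private lemma smul_one_psd {n : ℕ} {c : ℝ} (hc : 0 ≤ c) :
    (c • (1 : Matrix (Fin n) (Fin n) ℝ)).PosSemidef := by
  refine psd_of' (isHermitian_smul' Matrix.isHermitian_one) fun v => ?_
  simp only [Matrix.smul_mulVec, Matrix.one_mulVec, dotProduct_smul, smul_eq_mul]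
  exact mul_nonneg hc (Finset.sum_nonneg fun i _ => mul_self_nonneg _)

open Matrix in
private lemma trace_mul_self_ct_nonneg {n : ℕ} (M : Matrix (Fin n) (Fin n) ℝ) :
    0 ≤ (M * Mᴴ).trace := by
  simp only [Matrix.trace, Matrix.diag, Matrix.mul_apply, Matrix.conjTranspose_apply, star_trivial]
  exact Finset.sum_nonneg fun i _ => Finset.sum_nonneg fun j _ => mul_self_nonneg _

open Matrix MatrixOrder in
private lemma trace_mul_psd_nonneg {n : ℕ} {P Q : Matrix (Fin n) (Fin n) ℝ} (hP : P.PosSemidef)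
    (hQ : Q.PosSemidef) : 0 ≤ (P * Q).trace := by
  obtain ⟨B, rfl⟩ := CStarAlgebra.nonneg_iff_eq_star_mul_self.mp hP.nonneg
  obtain ⟨C, rfl⟩ := CStarAlgebra.nonneg_iff_eq_star_mul_self.mp hQ.nonneg
  simp only [Matrix.star_eq_conjTranspose]
  have : (Bᴴ * B * (Cᴴ * C)).trace = ((B * Cᴴ) * (B * Cᴴ)ᴴ).trace := by
    rw [Matrix.conjTranspose_mul, Matrix.conjTranspose_conjTranspose]
    rw [show Bᴴ * B * (Cᴴ * C) = Bᴴ * (B * Cᴴ * C) by noncomm_ring, Matrix.trace_mul_comm]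
    noncomm_ring
  rw [this]
  exact trace_mul_self_ct_nonneg _

open Matrix in
private lemma trace_mul_vecMulVec {n : ℕ} (A : Matrix (Fin n) (Fin n) ℝ) (w : Fin n → ℝ) :
    (A * vecMulVec w w).trace = w ⬝ᵥ A *ᵥ w := by
  simp only [Matrix.trace, Matrix.diag, Matrix.mul_apply, Matrix.vecMulVec_apply,
    dotProduct, Matrix.mulVec, Finset.mul_sum, Finset.sum_mul]
  congr 1; ext i; congr 1; ext j; ring

open Matrix in
private lemma vecMulVec_mulVec' {n : ℕ} (w u : Fin n → ℝ) :
    vecMulVec w w *ᵥ u = (w ⬝ᵥ u) • w := by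
  funext i
  simp only [Matrix.mulVec, Matrix.vecMulVec_apply, dotProduct, Pi.smul_apply, smul_eq_mul,
    Finset.sum_mul]
  congr 1; ext j; ring

open Matrix in
/-- Any eigenvalue of `H` (with unit eigenvector `w`) is at most `CE²((n-1)CS+2)`. -/
private lemma eigenvalue_le {n : ℕ} (hn : 2 ≤ n) {CE CS : ℝ} (hCE : 1 ≤ CE) (hCS : 0 < CS)
    {H A : Matrix (Fin n) (Fin n) ℝ} (hH : H.IsHermitian)
    (hHpsd : (H + CS • 1).PosSemidef)
    (hA1 : (A - (1 / CE) • 1).PosSemidef)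
    (hA2 : (CE • 1 - A).PosSemidef)
    (htr : (A * H).trace ≤ 2 * CE)
    {lam : ℝ} {w : Fin n → ℝ} (hweig : H *ᵥ w = lam • w) (hwn : w ⬝ᵥ w = 1) :
    lam ≤ CE ^ 2 * (((n : ℝ) - 1) * CS + 2) := by
  have hCE0 : (0:ℝ) < CE := lt_of_lt_of_le one_pos hCE
  have hn1 : (1:ℝ) ≤ (n:ℝ) - 1 := by
    have : (2:ℝ) ≤ (n:ℝ) := by exact_mod_cast hn
    linarith
  by_cases hlam : lam ≤ 0
  · have h0 : (0:ℝ) ≤ CE ^ 2 * (((n : ℝ) - 1) * CS + 2) :=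
      mul_nonneg (sq_nonneg CE) (by nlinarith)
    linarith
  push_neg at hlam
  set P : Matrix (Fin n) (Fin n) ℝ := vecMulVec w w with hPdef
  have hPherm : P.IsHermitian := by
    ext i j
    simp [hPdef, Matrix.conjTranspose_apply, Matrix.vecMulVec_apply, mul_comm]
  have hPpsd : P.PosSemidef := by
    refine psd_of' hPherm fun v => ?_
    rw [hPdef, vecMulVec_mulVec', dotProduct_smul, smul_eq_mul, dotProduct_comm]
    exact mul_self_nonneg _
  have hApsd : A.PosSemidef := by
    have h := hA1.add (smul_one_psd (n := n) (by positivity : (0:ℝ) ≤ 1/CE))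
    simpa using h
  have hHsymm : Hᵀ = H := hH
  have hsymH : ∀ u : Fin n → ℝ, w ⬝ᵥ H *ᵥ u = lam * (w ⬝ᵥ u) := by
    intro u
    rw [Matrix.dotProduct_mulVec, ← Matrix.mulVec_transpose, hHsymm, hweig,
      smul_dotProduct, smul_eq_mul]
  have hMherm : ((H - lam • P) + CS • (1 - P)).IsHermitian :=
    (hH.sub (isHermitian_smul' hPherm)).add
      (isHermitian_smul' (Matrix.isHermitian_one.sub hPherm))
  have hMpsd : ((H - lam • P) + CS • (1 - P)).PosSemidef := by
    refine psd_of' hMherm fun u => ?_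
    set c : ℝ := w ⬝ᵥ u with hc
    have hcu : u ⬝ᵥ w = c := dotProduct_comm u w
    have e1 : u ⬝ᵥ ((H - lam • P) + CS • (1 - P)) *ᵥ u
        = u ⬝ᵥ H *ᵥ u - lam * c ^ 2 + CS * (u ⬝ᵥ u - c ^ 2) := by
      rw [Matrix.add_mulVec, Matrix.sub_mulVec, Matrix.smul_mulVec,
        Matrix.smul_mulVec, Matrix.sub_mulVec, Matrix.one_mulVec,
        hPdef, vecMulVec_mulVec']
      simp only [dotProduct_add, dotProduct_sub, dotProduct_smul, smul_eq_mul, hcu]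
      ring
    have e2 : (u - c • w) ⬝ᵥ (H + CS • 1) *ᵥ (u - c • w)
        = u ⬝ᵥ H *ᵥ u - lam * c ^ 2 + CS * (u ⬝ᵥ u - c ^ 2) := by
      rw [Matrix.add_mulVec, Matrix.smul_mulVec, Matrix.one_mulVec,
        Matrix.mulVec_sub, Matrix.mulVec_smul, hweig]
      simp only [sub_dotProduct, smul_dotProduct, dotProduct_add,
        dotProduct_sub, dotProduct_smul, smul_eq_mul, hsymH u, hcu, hwn, ← hc]
      ring
    have := psd_dot' hHpsd (u - c • w)
    rw [e2] at this
    linarith [e1 ▸ this, le_of_eq e1]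
  have h1 : 0 ≤ (A * ((H - lam • P) + CS • (1 - P))).trace :=
    trace_mul_psd_nonneg hApsd hMpsd
  have htrP : P.trace = 1 := by
    have := trace_mul_vecMulVec (1 : Matrix (Fin n) (Fin n) ℝ) w
    rw [Matrix.one_mul, Matrix.one_mulVec, hwn] at this
    exact this
  have h2 : 1 / CE ≤ (A * P).trace := by
    have h := trace_mul_psd_nonneg hA1 hPpsd
    rw [Matrix.sub_mul, Matrix.trace_sub, Matrix.smul_mul, Matrix.trace_smul,
      Matrix.one_mul, htrP] at h
    simpa using h
  have h3 : (A * (1 - P)).trace ≤ CE * ((n : ℝ) - 1) := by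
    have hIP : (1 - P : Matrix (Fin n) (Fin n) ℝ).PosSemidef := by
      refine psd_of' (Matrix.isHermitian_one.sub hPherm) fun v => ?_
      rw [Matrix.sub_mulVec, Matrix.one_mulVec, dotProduct_sub, hPdef, vecMulVec_mulVec',
        dotProduct_smul, smul_eq_mul, dotProduct_comm v w]
      have hcs := Finset.sum_mul_sq_le_sq_mul_sq Finset.univ w v
      have hcs' : (w ⬝ᵥ v) ^ 2 ≤ (w ⬝ᵥ w) * (v ⬝ᵥ v) := by
        simpa [dotProduct, pow_two] using hcs
      nlinarith [hcs']
    have h := trace_mul_psd_nonneg hA2 hIP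
    rw [Matrix.sub_mul, Matrix.trace_sub, Matrix.smul_mul, Matrix.trace_smul,
      Matrix.one_mul] at h
    have htr1 : (1 - P : Matrix (Fin n) (Fin n) ℝ).trace = (n : ℝ) - 1 := by
      rw [Matrix.trace_sub, Matrix.trace_one, htrP]; simp
    rw [htr1] at h
    simpa using h
  have hexp : (A * ((H - lam • P) + CS • (1 - P))).trace
      = (A * H).trace - lam * (A * P).trace + CS * (A * (1 - P)).trace := by
    rw [Matrix.mul_add, Matrix.trace_add, Matrix.mul_sub, Matrix.trace_sub,
      Matrix.mul_smul, Matrix.trace_smul, Matrix.mul_smul, Matrix.trace_smul]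
    simp [smul_eq_mul]
  rw [hexp] at h1
  have hkey : lam * (1 / CE) ≤ lam * (A * P).trace :=
    mul_le_mul_of_nonneg_left h2 hlam.le
  have hCEinv : CE * (1 / CE) = 1 := by field_simp
  nlinarith [mul_le_mul_of_nonneg_left h3 hCS.le]

open Matrix in
private lemma upper_bound_psd {n : ℕ} (hn : 2 ≤ n) {CE CS : ℝ} (hCE : 1 ≤ CE) (hCS : 0 < CS)
    {H A : Matrix (Fin n) (Fin n) ℝ} (hH : H.IsHermitian)
    (hHpsd : (H + CS • 1).PosSemidef)
    (hA1 : (A - (1 / CE) • 1).PosSemidef)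
    (hA2 : (CE • 1 - A).PosSemidef)
    (htr : (A * H).trace ≤ 2 * CE) :
    ((CE ^ 2 * (((n : ℝ) - 1) * CS + 2)) • (1 : Matrix (Fin n) (Fin n) ℝ) - H).PosSemidef := by
  set C := CE ^ 2 * (((n : ℝ) - 1) * CS + 2) with hCdef
  have hCherm : ((C • (1 : Matrix (Fin n) (Fin n) ℝ)) - H).IsHermitian :=
    (isHermitian_smul' Matrix.isHermitian_one).sub hH
  apply hCherm.posSemidef_iff_eigenvalues_nonneg.mpr
  intro k
  set w : Fin n → ℝ := (WithLp.equiv 2 _) (hCherm.eigenvectorBasis k) with hwdef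
  have heig : (C • (1 : Matrix (Fin n) (Fin n) ℝ) - H) *ᵥ w = hCherm.eigenvalues k • w :=
    hCherm.mulVec_eigenvectorBasis k
  have hwn : w ⬝ᵥ w = 1 := by
    have h2 : (inner ℝ (hCherm.eigenvectorBasis k) (hCherm.eigenvectorBasis k) : ℝ) = 1 := by
      rw [real_inner_self_eq_norm_sq, hCherm.eigenvectorBasis.orthonormal.1 k]
      norm_num
    rw [PiLp.inner_apply] at h2
    simpa [RCLike.inner_apply, dotProduct, hwdef, pow_two] using h2
  have hHw : H *ᵥ w = (C - hCherm.eigenvalues k) • w := by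
    rw [Matrix.sub_mulVec, Matrix.smul_mulVec, Matrix.one_mulVec] at heig
    have : H *ᵥ w = C • w - hCherm.eigenvalues k • w := by
      rw [← heig]; abel
    rw [this, ← sub_smul]
  have := eigenvalue_le hn hCE hCS hH hHpsd hA1 hA2 htr hHw hwn
  linarith [show (0 : Fin n → ℝ) k = 0 from rfl]

noncomputable section

abbrev Euc (n : ℕ) := EuclideanSpace ℝ (Fin n)

/-- Second partial derivative `D_{ij}u`. -/
def pd2 (n : ℕ) (i j : Fin n) (u : Euc n → ℝ) (x : Euc n) : ℝ :=
  fderiv ℝ (fun y => fderiv ℝ u y (EuclideanSpace.single j 1)) x (EuclideanSpace.single i 1)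

/-- Hessian matrix `D²u`. -/
def hessM (n : ℕ) (u : Euc n → ℝ) (x : Euc n) : Matrix (Fin n) (Fin n) ℝ :=
  Matrix.of fun i j => pd2 n i j u x

/-- `|D²u|(x) = max_{i,j} |D_{ij}u(x)|`. -/
def hessMax (n : ℕ) (u : Euc n → ℝ) (x : Euc n) : ℝ :=
  ⨆ i : Fin n, ⨆ j : Fin n, |pd2 n i j u x|

private lemma pd2_eq {n : ℕ} {u : Euc n → ℝ} {x : Euc n} (hu : ContDiffAt ℝ 2 u x) (i j : Fin n) :
    pd2 n i j u x
      = fderiv ℝ (fderiv ℝ u) x (EuclideanSpace.single i 1) (EuclideanSpace.single j 1) := by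
  have hd : DifferentiableAt ℝ (fderiv ℝ u) x :=
    (hu.fderiv_right (m := 1) (by norm_num)).differentiableAt one_ne_zero
  unfold pd2
  rw [fderiv_clm_apply hd (differentiableAt_const _)]
  simp

private lemma hess_herm {n : ℕ} {u : Euc n → ℝ} {x : Euc n} (hu : ContDiffAt ℝ 2 u x) :
    (hessM n u x).IsHermitian := by
  have hsym := hu.isSymmSndFDerivAt (by simp)
  ext i j
  simp only [Matrix.conjTranspose_apply, hessM, Matrix.of_apply, star_trivial, pd2_eq hu]
  exact hsym _ _

open Matrix in
private lemma quad_eq {n : ℕ} {u : Euc n → ℝ} {x : Euc n} (hu : ContDiffAt ℝ 2 u x)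
    (v : Fin n → ℝ) :
    v ⬝ᵥ (hessM n u x) *ᵥ v
      = fderiv ℝ (fderiv ℝ u) x (∑ i, v i • EuclideanSpace.single i (1:ℝ))
          (∑ i, v i • EuclideanSpace.single i (1:ℝ)) := by
  simp only [map_sum, _root_.map_smul, ContinuousLinearMap.sum_apply,
    ContinuousLinearMap.smul_apply, ContinuousLinearMap.coe_smul', Pi.smul_apply, smul_eq_mul]
  simp only [dotProduct, Matrix.mulVec, hessM, Matrix.of_apply, pd2_eq hu,
    Finset.mul_sum]
  rw [Finset.sum_comm]
  congr 1; ext i; congr 1; ext j; ring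

/-- Second-derivative test at an interior local max. -/
private lemma snd_deriv_test {n : ℕ} {g : Euc n → ℝ} {x : Euc n} (hg : ContDiffAt ℝ 2 g x)
    (hmax : IsLocalMax g x) (w : Euc n) : fderiv ℝ (fderiv ℝ g) x w w ≤ 0 := by
  obtain ⟨u, hu_mem, hu⟩ := hg.contDiffOn (m := 2) le_rfl (by simp)
  obtain ⟨ε, hε, hball⟩ := Metric.nhds_basis_ball.mem_iff.mp hu_mem
  have key : ∀ w : Euc n, x + w ∈ Metric.ball x ε → fderiv ℝ (fderiv ℝ g) x w w ≤ 0 := by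
    intro w hw
    have hint : interior (Metric.ball x ε) = Metric.ball x ε := Metric.isOpen_ball.interior_eq
    have hf' : ∀ y ∈ interior (Metric.ball x ε), HasFDerivAt g (fderiv ℝ g y) y := by
      intro y hy
      rw [hint] at hy
      have hcd : ContDiffAt ℝ 2 g y :=
        ((hu.mono hball).contDiffAt (Metric.isOpen_ball.mem_nhds hy))
      exact (hcd.differentiableAt two_ne_zero).hasFDerivAt
    have hx : HasFDerivWithinAt (fderiv ℝ g) (fderiv ℝ (fderiv ℝ g) x)
        (interior (Metric.ball x ε)) x :=
      (((hg.fderiv_right (m := 1) (by norm_num)).differentiableAt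
        one_ne_zero).hasFDerivAt).hasFDerivWithinAt
    have hxball : x ∈ Metric.ball x ε := Metric.mem_ball_self hε
    have h0 : x + (0 : Euc n) ∈ interior (Metric.ball x ε) := by
      rw [hint]; simpa only [add_zero] using hxball
    have hw' : x + (0 : Euc n) + w ∈ interior (Metric.ball x ε) := by
      rw [hint]; simpa only [add_zero] using hw
    have T := (convex_ball x ε).taylor_approx_two_segment hf' hxball hx h0 hw'
    set Q := fderiv ℝ (fderiv ℝ g) x w w with hQ
    have hf0 : fderiv ℝ g x = 0 := hmax.fderiv_eq_zero
    have T' : (fun h : ℝ => g (x + h • w) - g x - (h ^ 2 / 2) • Q) =o[nhdsWithin 0 (Set.Ioi 0)]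
        fun h => h ^ 2 := by
      simp only [smul_zero, add_zero, hf0, ContinuousLinearMap.zero_apply, map_zero,
        ContinuousLinearMap.map_zero, ContinuousLinearMap.zero_apply, sub_zero, smul_zero] at T
      exact T
    by_contra hQpos
    push_neg at hQpos
    have hQ4 : 0 < Q / 4 := by linarith
    have hsmall := (Asymptotics.isLittleO_iff.mp T') hQ4
    have hle : ∀ᶠ h : ℝ in nhdsWithin 0 (Set.Ioi 0), g (x + h • w) ≤ g x := by
      have hcont : Filter.Tendsto (fun h : ℝ => x + h • w) (nhdsWithin 0 (Set.Ioi 0)) (nhds x) := by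
        have h1 : Continuous (fun h : ℝ => x + h • w) :=
          continuous_const.add (continuous_id.smul continuous_const)
        have := (h1.tendsto 0).mono_left (nhdsWithin_le_nhds (s := Set.Ioi (0:ℝ)))
        simpa using this
      exact hcont.eventually hmax
    have hpos : ∀ᶠ h : ℝ in nhdsWithin 0 (Set.Ioi 0), (0:ℝ) < h := self_mem_nhdsWithin
    obtain ⟨h, hh1, hh2, hh3⟩ := (hsmall.and (hle.and hpos)).exists
    rw [Real.norm_eq_abs, Real.norm_eq_abs, smul_eq_mul] at hh1
    have habs := abs_le.mp hh1
    have hsq : |h ^ 2| = h ^ 2 := abs_of_nonneg (sq_nonneg h)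
    rw [hsq] at habs
    nlinarith [habs.1, habs.2, sq_nonneg h, mul_pos hh3 hh3]
  by_cases hw0 : w = 0
  · simp [hw0]
  · have hnorm : 0 < ‖w‖ := norm_pos_iff.mpr hw0
    set c : ℝ := ε / (2 * ‖w‖) with hc
    have hcpos : 0 < c := by positivity
    have hcw : x + c • w ∈ Metric.ball x ε := by
      simp only [Metric.mem_ball, dist_self_add_left, norm_smul, Real.norm_eq_abs,
        abs_of_pos hcpos]
      rw [hc, div_mul_eq_mul_div]
      rw [div_lt_iff₀ (by positivity)]
      nlinarith
    have hkey := key (c • w) hcw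
    have hexp : fderiv ℝ (fderiv ℝ g) x (c • w) (c • w)
        = c ^ 2 * fderiv ℝ (fderiv ℝ g) x w w := by
      simp only [map_smul, ContinuousLinearMap.smul_apply, ContinuousLinearMap.coe_smul',
        Pi.smul_apply, smul_eq_mul]
      ring
    rw [hexp] at hkey
    nlinarith [mul_pos hcpos hcpos]

private lemma hess_sub {n : ℕ} {φ₀ φ₁ : Euc n → ℝ} {x : Euc n}
    (hφ₀ : ContDiffAt ℝ 2 φ₀ x) (hφ₁ : ContDiffAt ℝ 2 φ₁ x) :
    fderiv ℝ (fderiv ℝ (fun y => φ₁ y - φ₀ y)) x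
      = fderiv ℝ (fderiv ℝ φ₁) x - fderiv ℝ (fderiv ℝ φ₀) x := by
  have h0 : ∀ᶠ y in nhds x, DifferentiableAt ℝ φ₀ y := by
    filter_upwards [hφ₀.eventually (by simp)] with y hy
    exact hy.differentiableAt two_ne_zero
  have h1 : ∀ᶠ y in nhds x, DifferentiableAt ℝ φ₁ y := by
    filter_upwards [hφ₁.eventually (by simp)] with y hy
    exact hy.differentiableAt two_ne_zero
  have heq : (fderiv ℝ (fun y => φ₁ y - φ₀ y)) =ᶠ[nhds x]
      fun y => fderiv ℝ φ₁ y - fderiv ℝ φ₀ y := by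
    filter_upwards [h0, h1] with y hy0 hy1
    exact fderiv_sub hy1 hy0
  rw [heq.fderiv_eq]
  have d1 : DifferentiableAt ℝ (fderiv ℝ φ₁) x :=
    (hφ₁.fderiv_right (m := 1) (by norm_num)).differentiableAt one_ne_zero
  have d0 : DifferentiableAt ℝ (fderiv ℝ φ₀) x :=
    (hφ₀.fderiv_right (m := 1) (by norm_num)).differentiableAt one_ne_zero
  exact fderiv_sub d1 d0

/-- Hessian bounds at a touching point of an ordered pair of support functions
(claim in the regularity proof of Theorem 2.4). -/
theorem hessian_bounds_at_touching_point
    (n : ℕ) (hn : 2 ≤ n) (CE CS : ℝ) (hCE : 1 ≤ CE) (hCS : 0 < CS)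
    (x : Euc n) (φ₀ φ₁ : Euc n → ℝ)
    (hφ₀ : ContDiffAt ℝ 2 φ₀ x) (hφ₁ : ContDiffAt ℝ 2 φ₁ x)
    (hmax : IsLocalMax (fun y => φ₁ y - φ₀ y) x)
    (hhess₁ : (hessM n φ₁ x + CS • (1 : Matrix (Fin n) (Fin n) ℝ)).PosSemidef)
    (hA : ∃ A : Matrix (Fin n) (Fin n) ℝ, A.IsSymm ∧
      (A - (1 / CE) • (1 : Matrix (Fin n) (Fin n) ℝ)).PosSemidef ∧
      (CE • (1 : Matrix (Fin n) (Fin n) ℝ) - A).PosSemidef ∧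
      (A * hessM n φ₀ x).trace ≤ 2 * CE) :
    ((CE ^ 2 * (((n : ℝ) - 1) * CS + 2)) • (1 : Matrix (Fin n) (Fin n) ℝ)
        - hessM n φ₀ x).PosSemidef ∧
    (hessM n φ₀ x + (CE ^ 2 * (((n : ℝ) - 1) * CS + 2)) •
        (1 : Matrix (Fin n) (Fin n) ℝ)).PosSemidef ∧
    ((CE ^ 2 * (((n : ℝ) - 1) * CS + 2)) • (1 : Matrix (Fin n) (Fin n) ℝ)
        - hessM n φ₁ x).PosSemidef ∧
    (hessM n φ₁ x + (CE ^ 2 * (((n : ℝ) - 1) * CS + 2)) •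
        (1 : Matrix (Fin n) (Fin n) ℝ)).PosSemidef := by
  obtain ⟨A, hAsymm, hA1, hA2, htr⟩ := hA
  set C := CE ^ 2 * (((n : ℝ) - 1) * CS + 2) with hCdef
  have hn1 : (1:ℝ) ≤ (n:ℝ) - 1 := by
    have : (2:ℝ) ≤ (n:ℝ) := by exact_mod_cast hn
    linarith
  have hCE2 : (1:ℝ) ≤ CE ^ 2 := by nlinarith
  have hCSC : CS ≤ C := by
    have hpos : (0:ℝ) ≤ ((n:ℝ) - 1) * CS + 2 := by nlinarith
    have h1 : ((n:ℝ) - 1) * CS + 2 ≤ C := by nlinarith [mul_nonneg (sub_nonneg.mpr hCE2) hpos]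
    nlinarith
  have hH0 : (hessM n φ₀ x).IsHermitian := hess_herm hφ₀
  have hH1 : (hessM n φ₁ x).IsHermitian := hess_herm hφ₁
  have hg : ContDiffAt ℝ 2 (fun y => φ₁ y - φ₀ y) x := hφ₁.sub hφ₀
  -- D²φ₀ ≥ D²φ₁ at the touching point
  have hdiff : (hessM n φ₀ x - hessM n φ₁ x).PosSemidef := by
    refine psd_of' (hH0.sub hH1) fun v => ?_
    have q0 := quad_eq hφ₀ v
    have q1 := quad_eq hφ₁ v
    have htest := snd_deriv_test hg hmax (∑ i, v i • EuclideanSpace.single i (1:ℝ))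
    rw [hess_sub hφ₀ hφ₁] at htest
    simp only [ContinuousLinearMap.sub_apply, ContinuousLinearMap.coe_sub', Pi.sub_apply] at htest
    rw [Matrix.sub_mulVec, dotProduct_sub, q0, q1]
    linarith
  have hpsd0 : (hessM n φ₀ x + CS • (1 : Matrix (Fin n) (Fin n) ℝ)).PosSemidef := by
    have h := hdiff.add hhess₁
    have he : (hessM n φ₀ x - hessM n φ₁ x) + (hessM n φ₁ x + CS • 1)
        = hessM n φ₀ x + CS • (1 : Matrix (Fin n) (Fin n) ℝ) := by abel
    rwa [he] at h
  have hup0 : (C • (1 : Matrix (Fin n) (Fin n) ℝ) - hessM n φ₀ x).PosSemidef :=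
    upper_bound_psd hn hCE hCS hH0 hpsd0 hA1 hA2 htr
  have hup1 : (C • (1 : Matrix (Fin n) (Fin n) ℝ) - hessM n φ₁ x).PosSemidef := by
    have h := hup0.add hdiff
    have he : (C • (1 : Matrix (Fin n) (Fin n) ℝ) - hessM n φ₀ x)
        + (hessM n φ₀ x - hessM n φ₁ x)
        = C • (1 : Matrix (Fin n) (Fin n) ℝ) - hessM n φ₁ x := by abel
    rwa [he] at h
  have hCCS : (0:ℝ) ≤ C - CS := by linarith
  have hlow0 : (hessM n φ₀ x + C • (1 : Matrix (Fin n) (Fin n) ℝ)).PosSemidef := by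
    have h := hpsd0.add (smul_one_psd (n := n) hCCS)
    have he : (hessM n φ₀ x + CS • 1) + (C - CS) • (1 : Matrix (Fin n) (Fin n) ℝ)
        = hessM n φ₀ x + C • (1 : Matrix (Fin n) (Fin n) ℝ) := by
      rw [add_assoc, ← add_smul, show CS + (C - CS) = C by ring]
    rwa [he] at h
  have hlow1 : (hessM n φ₁ x + C • (1 : Matrix (Fin n) (Fin n) ℝ)).PosSemidef := by
    have h := hhess₁.add (smul_one_psd (n := n) hCCS)
    have he : (hessM n φ₁ x + CS • 1) + (C - CS) • (1 : Matrix (Fin n) (Fin n) ℝ)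
        = hessM n φ₁ x + C • (1 : Matrix (Fin n) (Fin n) ℝ) := by
      rw [add_assoc, ← add_smul, show CS + (C - CS) = C by ring]
    rwa [he] at h
  exact ⟨hup0, hlow0, hup1, hlow1⟩

end
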